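/- arXiv:2503.23790 — 3 statements merged into one kernel-verified Lean document; each statement's English description precedes it below -/
import Mathlib

section
/- Let R = ⊕_{m≥0} R_m be a commutative graded ℂ-algebra with R_0 = ℂ, finitely generated in degree 1, equipped with an additional ℤ-grading R_m = ⊕_{k∈ℤ} (R_m)_k compatible with multiplication ((R_m)_k · (R_{m'})_{k'} ⊆ (R_{m+m'})_{k+k'}). Then for any rational numbers τ_- ≤ τ_+, the subalgebra A(τ_-,τ_+) = ⊕_{m≥0} ⊕_{mτ_- ≤ k ≤ mτ_+} (R_m)_k is a finitely generated ℂ-algebra. -/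
set_option linter.unusedVariables false

theorem rat_mul_le (τ : ℚ) (a : ℕ) (b : ℤ) :
    τ * a ≤ (b : ℚ) ↔ τ.num * a ≤ (τ.den : ℤ) * b := by
  have hden : (0 : ℚ) < (τ.den : ℚ) := by exact_mod_cast τ.pos
  have hnum : (τ.num : ℚ) = τ * (τ.den : ℚ) := by
    field_simp [Rat.num_div_den]
    exact (Rat.mul_den_eq_num τ).symm
  rw [show (τ.num * a ≤ (τ.den : ℤ) * b) ↔
      ((τ.num * a : ℤ) : ℚ) ≤ (((τ.den : ℤ) * b : ℤ) : ℚ) from Int.cast_le.symm]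
  push_cast
  rw [hnum]
  have h : τ * (τ.den : ℚ) * a = (τ.den : ℚ) * (τ * a) := by ring
  rw [h, mul_le_mul_iff_right₀ hden]

theorem rat_le_mul (τ : ℚ) (a : ℕ) (b : ℤ) :
    (b : ℚ) ≤ τ * a ↔ (τ.den : ℤ) * b ≤ τ.num * a := by
  have hden : (0 : ℚ) < (τ.den : ℚ) := by exact_mod_cast τ.pos
  have hnum : (τ.num : ℚ) = τ * (τ.den : ℚ) := by
    field_simp [Rat.num_div_den]
    exact (Rat.mul_den_eq_num τ).symm
  rw [show ((τ.den : ℤ) * b ≤ τ.num * a) ↔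
      (((τ.den : ℤ) * b : ℤ) : ℚ) ≤ ((τ.num * a : ℤ) : ℚ) from Int.cast_le.symm]
  push_cast
  rw [hnum]
  have h : τ * (τ.den : ℚ) * a = (τ.den : ℚ) * (τ * a) := by ring
  rw [h, mul_le_mul_iff_right₀ hden]

theorem my_gordan {ι : Type} [Fintype ι] (w₁ w₂ : ι → ℤ) :
    ∃ G : Set (ι → ℕ), G.Finite ∧
      (∀ α ∈ G, 0 ≤ ∑ i, (α i : ℤ) * w₁ i ∧ 0 ≤ ∑ i, (α i : ℤ) * w₂ i) ∧
      (∀ α : ι → ℕ, 0 ≤ ∑ i, (α i : ℤ) * w₁ i → 0 ≤ ∑ i, (α i : ℤ) * w₂ i →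
        α ∈ AddSubmonoid.closure G) := by
  classical
  set lin : (ι → ℤ) → (ι → ℕ) → ℤ := fun w α => ∑ i, (α i : ℤ) * w i with hlin
  set S : Set (ι → ℕ) := {α | 0 ≤ lin w₁ α ∧ 0 ≤ lin w₂ α} with hS
  set P : (ι → ℕ) → (ι → ℕ) → Prop :=
    fun α β => α ≤ β ∧ lin w₁ α ≤ lin w₁ β ∧ lin w₂ α ≤ lin w₂ β with hP
  have hlinsub : ∀ (w : ι → ℤ) (α β : ι → ℕ), α ≤ β → lin w (β - α) = lin w β - lin w α := by
    intro w α β hab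
    simp only [hlin]
    rw [← Finset.sum_sub_distrib]
    refine Finset.sum_congr rfl fun i _ => ?_
    have h := hab i
    rw [Pi.sub_apply, Nat.cast_sub h, sub_mul]
  have hsubS : ∀ α β, α ∈ S → β ∈ S → P α β → (β - α) ∈ S := by
    rintro α β hα hβ ⟨h1, h2, h3⟩
    constructor
    · rw [hlinsub _ _ _ h1]; omega
    · rw [hlinsub _ _ _ h1]; omega
  have haddsub : ∀ α β : ι → ℕ, α ≤ β → α + (β - α) = β := by
    intro α β h; funext i; have hi : α i ≤ β i := h i
    simp only [Pi.add_apply, Pi.sub_apply]; omega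
  set G : Set (ι → ℕ) := {α | α ∈ S ∧ α ≠ 0 ∧ ∀ β ∈ S, β ≠ 0 → P β α → β = α} with hG
  have hreach : ∀ (N : ℕ) (α : ι → ℕ), α ∈ S → α ≠ 0 → (∑ i, α i) ≤ N → ∃ g ∈ G, P g α := by
    intro N
    induction N with
    | zero =>
      intro α hα hα0 hsum
      exfalso; apply hα0; funext i
      have h0 : ∑ i, α i = 0 := Nat.le_zero.mp hsum
      exact Finset.sum_eq_zero_iff.mp h0 i (Finset.mem_univ i)
    | succ N ih =>
      intro α hα hα0 hsum
      by_cases hmin : ∀ β ∈ S, β ≠ 0 → P β α → β = α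
      · exact ⟨α, ⟨hα, hα0, hmin⟩, le_refl _, le_refl _, le_refl _⟩
      · push_neg at hmin
        obtain ⟨β, hβS, hβ0, hPβ, hne⟩ := hmin
        have hlt : ∑ i, β i < ∑ i, α i := by
          have hle : ∀ i ∈ Finset.univ, β i ≤ α i := fun i _ => hPβ.1 i
          have hex : ∃ i ∈ Finset.univ, β i < α i := by
            by_contra hc; push_neg at hc
            apply hne; funext i
            exact le_antisymm (hPβ.1 i) (hc i (Finset.mem_univ i))
          exact Finset.sum_lt_sum hle hex
        obtain ⟨g, hgG, hgP⟩ := ih β hβS hβ0 (by omega)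
        exact ⟨g, hgG, hgP.1.trans hPβ.1, hgP.2.1.trans hPβ.2.1, hgP.2.2.trans hPβ.2.2⟩
  have hGfin : G.Finite := by
    by_contra hinf
    have hinf' : G.Infinite := hinf
    set u := hinf'.natEmbedding with hu
    set v : ℕ → (ι ⊕ Bool → ℕ) := fun n => Sum.elim (fun i => (u n : ι → ℕ) i)
      (fun b => if b then (lin w₁ (u n)).toNat else (lin w₂ (u n)).toNat) with hv
    obtain ⟨a, b, hab, hle⟩ := (Set.isPWO_of_wellQuasiOrderedLE
      (Set.univ : Set (ι ⊕ Bool → ℕ))) (fun n => ⟨v n, Set.mem_univ _⟩)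
    have hSa : ((u a : ι → ℕ)) ∈ S := (u a).2.1
    have hSb : ((u b : ι → ℕ)) ∈ S := (u b).2.1
    have h1 : (u a : ι → ℕ) ≤ (u b : ι → ℕ) := fun i => hle (Sum.inl i)
    have h2 : lin w₁ (u a) ≤ lin w₁ (u b) := by
      have h := hle (Sum.inr true)
      simp only [hv, Sum.elim_inr, if_true] at h
      calc lin w₁ (u a) = ((lin w₁ (u a)).toNat : ℤ) := (Int.toNat_of_nonneg hSa.1).symm
        _ ≤ ((lin w₁ (u b)).toNat : ℤ) := by exact_mod_cast h
        _ = lin w₁ (u b) := Int.toNat_of_nonneg hSb.1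
    have h3 : lin w₂ (u a) ≤ lin w₂ (u b) := by
      have h := hle (Sum.inr false)
      simp only [hv, Sum.elim_inr, if_false] at h
      calc lin w₂ (u a) = ((lin w₂ (u a)).toNat : ℤ) := (Int.toNat_of_nonneg hSa.2).symm
        _ ≤ ((lin w₂ (u b)).toNat : ℤ) := by exact_mod_cast h
        _ = lin w₂ (u b) := Int.toNat_of_nonneg hSb.2
    have heq : (u a : ι → ℕ) = (u b : ι → ℕ) := (u b).2.2.2 _ hSa (u a).2.2.1 ⟨h1, h2, h3⟩
    exact absurd (u.injective (Subtype.ext heq)) (by omega)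
  have hgen : ∀ (N : ℕ) (α : ι → ℕ), α ∈ S → (∑ i, α i) ≤ N →
      α ∈ AddSubmonoid.closure G := by
    intro N
    induction N with
    | zero =>
      intro α hα hsum
      have h0 : α = 0 := by
        funext i
        have h0 : ∑ i, α i = 0 := Nat.le_zero.mp hsum
        exact Finset.sum_eq_zero_iff.mp h0 i (Finset.mem_univ i)
      rw [h0]; exact zero_mem _
    | succ N ih =>
      intro α hα hsum
      by_cases h0 : α = 0
      · rw [h0]; exact zero_mem _
      · obtain ⟨g, hgG, hgP⟩ := hreach (N + 1) α hα h0 hsum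
        have hδ : (α - g) ∈ S := hsubS g α hgG.1 hα hgP
        have hsumeq : ∑ i, g i + ∑ i, (α - g) i = ∑ i, α i := by
          rw [← Finset.sum_add_distrib]
          refine Finset.sum_congr rfl fun i _ => ?_
          have hi : g i ≤ α i := hgP.1 i
          simp only [Pi.add_apply, Pi.sub_apply]; omega
        have hgpos : 0 < ∑ i, g i := by
          rcases Nat.eq_zero_or_pos (∑ i, g i) with h | h
          · exfalso; apply hgG.2.1; funext i
            exact Finset.sum_eq_zero_iff.mp h i (Finset.mem_univ i)
          · exact h
        have hsum2 : ∑ i, (α - g) i ≤ N := by omega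
        have hmem := ih _ hδ hsum2
        have heq : α = g + (α - g) := (haddsub g α hgP.1).symm
        rw [heq]
        exact AddSubmonoid.add_mem _ (AddSubmonoid.subset_closure hgG) hmem
  exact ⟨G, hGfin, fun α hα => hα.1, fun α h1 h2 => hgen (∑ i, α i) α ⟨h1, h2⟩ le_rfl⟩

theorem prod_pow_mem_graded {R : Type} [CommRing R] [Algebra ℂ R]
    (𝒜 : ℕ × ℤ → Submodule ℂ R) [GradedAlgebra 𝒜] {ι : Type} [Fintype ι]
    (f : ι → R) (d : ι → ℕ × ℤ) (hf : ∀ i, f i ∈ 𝒜 (d i)) (α : ι → ℕ) :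
    (∏ i, f i ^ α i) ∈ 𝒜 (∑ i, α i • d i) := by
  classical
  have : ∀ s : Finset ι, (∏ i ∈ s, f i ^ α i) ∈ 𝒜 (∑ i ∈ s, α i • d i) := by
    intro s
    induction s using Finset.induction with
    | empty => simpa using SetLike.one_mem_graded 𝒜
    | insert x s hx ih =>
      rw [Finset.prod_insert hx, Finset.sum_insert hx]
      exact SetLike.mul_mem_graded (SetLike.pow_mem_graded _ (hf _)) ih
  exact this Finset.univ

/-- Let `R = ⊕_{m≥0} R_m` be a commutative graded `ℂ`-algebra with
`R_0 = ℂ`, finitely generated in degree `1`, equipped with a compatible second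
`ℤ`-grading `R_m = ⊕_k (R_m)_k` (encoded here as an `ℕ × ℤ`-graded algebra `𝒜`).
Then for rationals `τ₋ ≤ τ₊` the subalgebra
`A(τ₋,τ₊) = ⊕_{m≥0} ⊕_{mτ₋ ≤ k ≤ mτ₊} (R_m)_k` — which equals the subalgebra
generated by the pieces `𝒜 (m,k)` with `mτ₋ ≤ k ≤ mτ₊` — is a finitely generated
`ℂ`-algebra. -/
theorem stmt_3 (R : Type) [CommRing R] [Algebra ℂ R]
    (𝒜 : ℕ × ℤ → Submodule ℂ R) [GradedAlgebra 𝒜]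
    (h00 : 𝒜 (0, 0) = Submodule.span ℂ {(1 : R)})
    (h0k : ∀ k : ℤ, k ≠ 0 → 𝒜 (0, k) = ⊥)
    (hdeg1 : Algebra.adjoin ℂ (⋃ k : ℤ, (𝒜 (1, k) : Set R)) = ⊤)
    (hfg : (⊤ : Subalgebra ℂ R).FG)
    (τm τp : ℚ) (hτ : τm ≤ τp) :
    (Algebra.adjoin ℂ
      (⋃ p ∈ {p : ℕ × ℤ | τm * p.1 ≤ (p.2 : ℚ) ∧ (p.2 : ℚ) ≤ τp * p.1},
        (𝒜 p : Set R))).FG := by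
  classical
  obtain ⟨t, ht⟩ := hfg
  -- homogeneous generators
  set gens : Finset (R × (ℕ × ℤ)) :=
    t.biUnion (fun x => (DirectSum.decompose 𝒜 x).support.image
      (fun p => ((DirectSum.decompose 𝒜 x p : R), p))) with hgens
  set ι : Type := {q : R × (ℕ × ℤ) // q ∈ gens} with hι
  haveI : Fintype ι := FinsetCoe.fintype gens
  set f : ι → R := fun q => q.1.1 with hf
  set d : ι → ℕ × ℤ := fun q => q.1.2 with hd
  have hfd : ∀ q : ι, f q ∈ 𝒜 (d q) := by
    rintro ⟨⟨a, p⟩, hq⟩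
    obtain ⟨x, hx, hq2⟩ := Finset.mem_biUnion.mp hq
    obtain ⟨p', hp', heq⟩ := Finset.mem_image.mp hq2
    rw [Prod.ext_iff] at heq
    obtain ⟨h1, h2⟩ := heq
    subst h2
    simp only [hf, hd]
    have h1' : (↑(DirectSum.decompose 𝒜 x p') : R) = a := h1
    rw [← h1']
    exact (DirectSum.decompose 𝒜 x p').2
  -- all generators are in adjoin of range f
  have hgen : Algebra.adjoin ℂ (Set.range f) = ⊤ := by
    rw [eq_top_iff, ← ht]
    apply Algebra.adjoin_le
    intro x hx
    have hx' : x = ∑ p ∈ (DirectSum.decompose 𝒜 x).support, (DirectSum.decompose 𝒜 x p : R) :=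
      (DirectSum.sum_support_decompose 𝒜 x).symm
    rw [hx']
    apply Subalgebra.sum_mem
    intro p hp
    apply Algebra.subset_adjoin
    exact ⟨⟨((DirectSum.decompose 𝒜 x p : R), p),
      Finset.mem_biUnion.mpr ⟨x, hx, Finset.mem_image.mpr ⟨p, hp, rfl⟩⟩⟩, rfl⟩
  -- monomials
  set m : (ι → ℕ) → R := fun α => ∏ q, f q ^ α q with hm
  set deg : (ι → ℕ) → ℕ × ℤ := fun α => ∑ q, α q • d q with hdeg
  have hmem : ∀ α, m α ∈ 𝒜 (deg α) := fun α => prod_pow_mem_graded 𝒜 f d hfd α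
  have hmadd : ∀ α β, m (α + β) = m α * m β := by
    intro α β
    simp only [hm, Pi.add_apply, pow_add, Finset.prod_mul_distrib]
  have hm0 : m 0 = 1 := by simp [hm]
  have hdegadd : ∀ α β, deg (α + β) = deg α + deg β := by
    intro α β
    simp only [hdeg, Pi.add_apply, add_smul, Finset.sum_add_distrib]
  -- the monomials span R
  have hspan : Submodule.span ℂ (Set.range m) = ⊤ := by
    rw [eq_top_iff]
    have h1 : (⊤ : Submodule ℂ R) = Subalgebra.toSubmodule (Algebra.adjoin ℂ (Set.range f)) := by
      rw [hgen, Algebra.top_toSubmodule]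
    rw [h1, Algebra.adjoin_eq_span]
    apply Submodule.span_le.mpr
    intro y hy
    have hy' : y ∈ Submonoid.closure (Set.range f) := hy
    apply Submodule.subset_span
    refine Submonoid.closure_induction (fun z hz => ?_) ⟨0, hm0⟩
      (fun z w _ _ ⟨α, hα⟩ ⟨β, hβ⟩ => ⟨α + β, by rw [hmadd, hα, hβ]⟩) hy'
    · obtain ⟨q, rfl⟩ := hz
      refine ⟨Pi.single q 1, ?_⟩
      simp only [hm]
      rw [Finset.prod_eq_single q (fun i _ hne => by rw [Pi.single_eq_of_ne hne, pow_zero])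
        (fun h => absurd (Finset.mem_univ q) h)]
      rw [Pi.single_eq_same, pow_one]
  -- each graded piece is spanned by monomials of that degree
  have hproj : ∀ p : ℕ × ℤ, (𝒜 p : Set R) ⊆
      (Submodule.span ℂ (m '' {α | deg α = p}) : Submodule ℂ R) := by
    intro p
    set π : R →ₗ[ℂ] R := (𝒜 p).subtype ∘ₗ
      (DirectSum.component ℂ (ℕ × ℤ) (fun i => ↥(𝒜 i)) p) ∘ₗ
      (DirectSum.decomposeLinearEquiv 𝒜).toLinearMap with hπdef
    have hπ : ∀ y, π y = (DirectSum.decompose 𝒜 y p : R) := fun y => rfl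
    intro x hx
    have hcom : Submodule.span ℂ (Set.range m) ≤
        Submodule.comap π (Submodule.span ℂ (m '' {α | deg α = p})) := by
      rw [Submodule.span_le]
      rintro _ ⟨α, rfl⟩
      simp only [Set.mem_setOf_eq, SetLike.mem_coe, Submodule.mem_comap]
      by_cases hdp : deg α = p
      · rw [hπ, DirectSum.decompose_of_mem_same 𝒜 (hdp ▸ hmem α)]
        exact Submodule.subset_span ⟨α, hdp, rfl⟩
      · rw [hπ, DirectSum.decompose_of_mem_ne 𝒜 (hmem α) hdp]
        exact zero_mem _
    have hx2 := hcom (hspan ▸ Submodule.mem_top (x := x))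
    rw [Submodule.mem_comap, hπ, DirectSum.decompose_of_mem_same 𝒜 hx] at hx2
    exact hx2
  -- weights
  set w₁ : ι → ℤ := fun q => (τm.den : ℤ) * (d q).2 - τm.num * (d q).1 with hw₁
  set w₂ : ι → ℤ := fun q => τp.num * (d q).1 - (τp.den : ℤ) * (d q).2 with hw₂
  have hfst : ∀ α : ι → ℕ, (((deg α).1 : ℤ)) = ∑ q, (α q : ℤ) * ((d q).1 : ℤ) := by
    intro α
    simp only [hdeg, Prod.fst_sum, Prod.smul_fst, smul_eq_mul]
    push_cast
    rfl
  have hsnd : ∀ α : ι → ℕ, (deg α).2 = ∑ q, (α q : ℤ) * (d q).2 := by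
    intro α
    simp only [hdeg, Prod.snd_sum, Prod.smul_snd]
    refine Finset.sum_congr rfl fun q _ => ?_
    rw [nsmul_eq_mul]
  have hlin₁ : ∀ α : ι → ℕ, ∑ q, (α q : ℤ) * w₁ q
      = (τm.den : ℤ) * (deg α).2 - τm.num * ((deg α).1 : ℤ) := by
    intro α
    rw [hfst, hsnd, Finset.mul_sum, Finset.mul_sum, ← Finset.sum_sub_distrib]
    refine Finset.sum_congr rfl fun q _ => ?_
    simp only [hw₁]; ring
  have hlin₂ : ∀ α : ι → ℕ, ∑ q, (α q : ℤ) * w₂ q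
      = τp.num * ((deg α).1 : ℤ) - (τp.den : ℤ) * (deg α).2 := by
    intro α
    rw [hfst, hsnd, Finset.mul_sum, Finset.mul_sum, ← Finset.sum_sub_distrib]
    refine Finset.sum_congr rfl fun q _ => ?_
    simp only [hw₂]; ring
  have hC : ∀ α : ι → ℕ,
      (τm * ((deg α).1 : ℚ) ≤ ((deg α).2 : ℚ) ∧ ((deg α).2 : ℚ) ≤ τp * ((deg α).1 : ℚ)) ↔
      (0 ≤ ∑ q, (α q : ℤ) * w₁ q ∧ 0 ≤ ∑ q, (α q : ℤ) * w₂ q) := by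
    intro α
    rw [hlin₁, hlin₂, sub_nonneg, sub_nonneg, rat_mul_le, rat_le_mul]
  obtain ⟨G, hGfin, hGS, hGgen⟩ := my_gordan w₁ w₂
  have hclosure : ∀ β, β ∈ AddSubmonoid.closure G →
      m β ∈ Algebra.adjoin ℂ (m '' G) := by
    intro β hβ
    induction hβ using AddSubmonoid.closure_induction with
    | mem z hz => exact Algebra.subset_adjoin (Set.mem_image_of_mem m hz)
    | zero => rw [hm0]; exact one_mem _
    | add x y hx hy hmx hmy => rw [hmadd]; exact mul_mem hmx hmy
  rw [Subalgebra.fg_def]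
  refine ⟨m '' G, hGfin.image m, le_antisymm ?_ ?_⟩
  · rw [Algebra.adjoin_le_iff]
    rintro _ ⟨α, hαG, rfl⟩
    apply Algebra.subset_adjoin
    have hαS := hGS α hαG
    exact Set.mem_biUnion ((hC α).mpr hαS) (hmem α)
  · rw [Algebra.adjoin_le_iff]
    intro x hx
    rw [Set.mem_iUnion₂] at hx
    obtain ⟨p, hp, hxp⟩ := hx
    have h1 := hproj p hxp
    have h2 : Submodule.span ℂ (m '' {α | deg α = p}) ≤
        Subalgebra.toSubmodule (Algebra.adjoin ℂ (m '' G)) := by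
      rw [Submodule.span_le]
      rintro _ ⟨α, hα, rfl⟩
      have hdC : τm * ((deg α).1 : ℚ) ≤ ((deg α).2 : ℚ) ∧
          ((deg α).2 : ℚ) ≤ τp * ((deg α).1 : ℚ) := by
        rw [hα]; exact hp
      have hcc := (hC α).mp hdC
      exact hclosure α (hGgen α hcc.1 hcc.2)
    exact h2 h1
end

section
/- Let R = ⊕_{m≥0} R_m be a finitely generated graded ℂ-algebra with a compatible second ℤ-grading as above. For any rational number τ, the subalgebra A(τ) = ⊕_{m≥0, mτ∈ℤ} (R_m)_{mτ} is a finitely generated ℂ-algebra. -/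
/-- **Gordan's lemma** (special case): the submonoid of `ι → ℕ` cut out by an
integer linear equation is finitely generated. -/
lemma gordan_fg {ι : Type} [Fintype ι] (t : ι → ℤ) :
    ∃ G : Finset (ι → ℕ),
      (∀ β ∈ G, ∑ i, (β i : ℤ) * t i = 0) ∧
      ∀ α : ι → ℕ, (∑ i, (α i : ℤ) * t i = 0) →
        α ∈ AddSubmonoid.closure (G : Set (ι → ℕ)) := by
  classical
  set M : Set (ι → ℕ) := {α | ∑ i, (α i : ℤ) * t i = 0} with hM
  set Min : Set (ι → ℕ) :=
    {a | a ∈ M ∧ a ≠ 0 ∧ ∀ b ∈ M, b ≠ 0 → b ≤ a → b = a} with hMin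
  have hMinFin : Min.Finite := by
    refine IsAntichain.finite_of_partiallyWellOrderedOn (r := (· ≤ ·)) ?_
      (Set.isPWO_of_wellQuasiOrderedLE Min)
    intro a ha b hb hab hle
    exact hab (hb.2.2 a ha.1 ha.2.1 hle)
  have key : ∀ N : ℕ, ∀ a ∈ M, (∑ i, a i) < N →
      a ∈ AddSubmonoid.closure Min := by
    intro N
    induction N with
    | zero => intro a _ h; omega
    | succ N ih =>
      intro a haM hN
      by_cases h0 : a = 0
      · subst h0; exact zero_mem _
      by_cases hmin : a ∈ Min
      · exact AddSubmonoid.subset_closure hmin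
      · have : ¬ (∀ b ∈ M, b ≠ 0 → b ≤ a → b = a) := fun h => hmin ⟨haM, h0, h⟩
        push_neg at this
        obtain ⟨b, hbM, hb0, hba, hbne⟩ := this
        -- b is strictly below a
        have hltsum : ∑ i, b i < ∑ i, a i := by
          obtain ⟨j, hj⟩ := Function.ne_iff.mp hbne
          exact Finset.sum_lt_sum (fun i _ => hba i)
            ⟨j, Finset.mem_univ j, lt_of_le_of_ne (hba j) hj⟩
        have hbpos : 0 < ∑ i, b i := by
          obtain ⟨j, hj⟩ := Function.ne_iff.mp hb0
          exact Finset.sum_pos' (fun i _ => Nat.zero_le _)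
            ⟨j, Finset.mem_univ j, Nat.pos_of_ne_zero hj⟩
        have hsumab : ∑ i, (a - b) i + ∑ i, b i = ∑ i, a i := by
          rw [← Finset.sum_add_distrib]
          refine Finset.sum_congr rfl fun i _ => ?_
          have : b i ≤ a i := hba i; show a i - b i + b i = a i; omega
        have habM : a - b ∈ M := by
          have hcast : ∀ i, (((a - b) i : ℕ) : ℤ) = (a i : ℤ) - b i := by
            intro i; have : b i ≤ a i := hba i
            show ((a i - b i : ℕ) : ℤ) = _; omega
          simp only [hM, Set.mem_setOf_eq] at haM hbM ⊢
          calc ∑ i, ((a - b) i : ℤ) * t i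
              = ∑ i, ((a i : ℤ) * t i - (b i : ℤ) * t i) := by
                refine Finset.sum_congr rfl fun i _ => ?_
                rw [hcast i, sub_mul]
            _ = 0 := by rw [Finset.sum_sub_distrib, haM, hbM, sub_zero]
        have haeq : a = b + (a - b) := by
          funext i; have : b i ≤ a i := hba i
          show a i = b i + (a i - b i); omega
        rw [haeq]
        exact add_mem (ih b hbM (by omega)) (ih (a - b) habM (by omega))
  refine ⟨hMinFin.toFinset, ?_, ?_⟩
  · intro β hβ
    exact (hMinFin.mem_toFinset.mp hβ).1
  · intro α hα
    rw [hMinFin.coe_toFinset]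
    exact key (∑ i, α i + 1) α hα (Nat.lt_succ_self _)

/-- Let `R = ⊕_{m≥0} R_m` be a finitely generated graded `ℂ`-algebra
with a compatible second `ℤ`-grading (encoded as an `ℕ × ℤ`-graded algebra `𝒜`).
For any rational number `τ`, the subalgebra `A(τ) = ⊕_{m≥0, mτ∈ℤ} (R_m)_{mτ}` —
the subalgebra generated by the pieces `𝒜 (m,k)` with `k = mτ` — is a finitely
generated `ℂ`-algebra. -/
theorem stmt_4 (R : Type) [CommRing R] [Algebra ℂ R]
    (𝒜 : ℕ × ℤ → Submodule ℂ R) [GradedAlgebra 𝒜]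
    (hfg : (⊤ : Subalgebra ℂ R).FG)
    (τ : ℚ) :
    (Algebra.adjoin ℂ
      (⋃ p ∈ {p : ℕ × ℤ | (p.2 : ℚ) = τ * p.1}, (𝒜 p : Set R))).FG := by
  classical
  obtain ⟨s, hs⟩ := hfg
  -- a finite set of homogeneous generators, recorded together with their degrees
  set s' : Finset (R × (ℕ × ℤ)) :=
    s.biUnion (fun a => (DirectSum.decompose 𝒜 a).support.image
      (fun p => ((DirectSum.decompose 𝒜 a p : R), p))) with hs'
  set x : {y // y ∈ s'} → R := fun i => i.1.1 with hxdef
  set d : {y // y ∈ s'} → ℕ × ℤ := fun i => i.1.2 with hddef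
  have hx : ∀ i, x i ∈ 𝒜 (d i) := by
    rintro ⟨⟨r, p⟩, hi⟩
    simp only [hs', Finset.mem_biUnion, Finset.mem_image] at hi
    obtain ⟨a, -, q, -, h⟩ := hi
    obtain ⟨h1, h2⟩ := Prod.mk.injEq .. ▸ h
    show r ∈ 𝒜 p
    rw [← h1, ← h2]
    exact SetLike.coe_mem _
  -- the homogeneous generators generate
  have htop : ∀ r : R, r ∈ Algebra.adjoin ℂ (Set.range x) := by
    have hle : Algebra.adjoin ℂ (s : Set R) ≤ Algebra.adjoin ℂ (Set.range x) := by
      apply Algebra.adjoin_le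
      intro a ha
      rw [← DirectSum.sum_support_decompose 𝒜 a]
      refine Subalgebra.sum_mem _ fun p hp => ?_
      have hmem : ((DirectSum.decompose 𝒜 a p : R), p) ∈ s' := by
        simp only [hs', Finset.mem_biUnion]
        exact ⟨a, ha, Finset.mem_image_of_mem _ hp⟩
      exact Algebra.subset_adjoin ⟨⟨_, hmem⟩, rfl⟩
    intro r
    have := hs ▸ hle
    exact this (by trivial)
  -- monomials
  set X : ({y // y ∈ s'} → ℕ) → R := fun α => ∏ i, x i ^ α i with hX
  have hXmem : ∀ α, X α ∈ 𝒜 (∑ i, α i • d i) := fun α =>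
    SetLike.prod_pow_mem_graded 𝒜 d x α (fun i _ => hx i)
  -- the slope condition as an integral linear condition
  have hbQ : ((τ.den : ℚ)) ≠ 0 := by exact_mod_cast τ.den_ne_zero
  have hba : (τ.den : ℚ) * τ = (τ.num : ℚ) := by
    rw [mul_comm, ← eq_div_iff hbQ]
    exact (Rat.num_div_den τ).symm
  have hSiff : ∀ p : ℕ × ℤ, ((p.2 : ℚ) = τ * p.1) ↔
      (τ.den : ℤ) * p.2 = τ.num * p.1 := by
    intro p
    constructor
    · intro h
      have : (τ.den : ℚ) * (p.2 : ℚ) = (τ.num : ℚ) * (p.1 : ℚ) := by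
        rw [h, ← mul_assoc, hba]
      exact_mod_cast this
    · intro h
      have h' : (τ.den : ℚ) * (p.2 : ℚ) = (τ.num : ℚ) * (p.1 : ℚ) := by
        exact_mod_cast h
      apply mul_left_cancel₀ hbQ
      rw [← mul_assoc, hba]
      exact h'
  set t : {y // y ∈ s'} → ℤ :=
    fun i => (τ.den : ℤ) * (d i).2 - τ.num * (d i).1 with ht
  have hdeg : ∀ α : {y // y ∈ s'} → ℕ,
      ∑ i, (α i : ℤ) * t i =
        (τ.den : ℤ) * (∑ i, α i • d i).2 - τ.num * ((∑ i, α i • d i).1 : ℤ) := by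
    intro α
    have h1 : ((∑ i, α i • d i).1 : ℤ) = ∑ i, (α i : ℤ) * ((d i).1 : ℤ) := by
      rw [Prod.fst_sum]
      push_cast
      refine Finset.sum_congr rfl fun i _ => ?_
      simp [Prod.smul_fst, smul_eq_mul]
    have h2 : (∑ i, α i • d i).2 = ∑ i, (α i : ℤ) * (d i).2 := by
      rw [Prod.snd_sum]
      refine Finset.sum_congr rfl fun i _ => ?_
      simp [Prod.smul_snd, nsmul_eq_mul]
    rw [h1, h2, Finset.mul_sum, Finset.mul_sum, ← Finset.sum_sub_distrib]
    refine Finset.sum_congr rfl fun i _ => ?_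
    simp only [ht]
    ring
  obtain ⟨G, hG1, hG2⟩ := gordan_fg t
  -- monomials with exponents in the closure of `G` land in the adjoin of the
  -- finitely many monomials with exponents in `G`
  have hXadj : ∀ α ∈ AddSubmonoid.closure (G : Set ({y // y ∈ s'} → ℕ)),
      X α ∈ Algebra.adjoin ℂ (↑(G.image X) : Set R) := by
    intro α hα
    induction hα using AddSubmonoid.closure_induction with
    | mem β hβ =>
      exact Algebra.subset_adjoin (by
        simp only [Finset.coe_image, Set.mem_image, Finset.mem_coe]
        exact ⟨β, hβ, rfl⟩)
    | zero => simpa [hX] using (Algebra.adjoin ℂ (↑(G.image X) : Set R)).one_mem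
    | add β γ _ _ hβ hγ =>
      have : X (β + γ) = X β * X γ := by
        simp [hX, pow_add, Finset.prod_mul_distrib]
      rw [this]
      exact mul_mem hβ hγ
  -- every element of the multiplicative closure of the generators is a monomial
  have hmono : ∀ y ∈ Submonoid.closure (Set.range x),
      ∃ α : {y // y ∈ s'} → ℕ, y = X α := by
    intro y hy
    induction hy using Submonoid.closure_induction with
    | mem y hy =>
      obtain ⟨i, rfl⟩ := hy
      refine ⟨Pi.single i 1, ?_⟩
      simp only [hX]
      rw [Finset.prod_eq_single i
        (fun j _ hj => by rw [Pi.single_eq_of_ne hj, pow_zero])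
        (fun h => absurd (Finset.mem_univ i) h)]
      rw [Pi.single_eq_same, pow_one]
    | one => exact ⟨0, by simp [hX]⟩
    | mul u v _ _ hu hv =>
      obtain ⟨α, rfl⟩ := hu
      obtain ⟨β, rfl⟩ := hv
      exact ⟨α + β, by simp [hX, pow_add, Finset.prod_mul_distrib]⟩
  -- the key inclusion: each relevant graded piece is contained in the adjoin of
  -- the finitely many monomials
  have hK : ∀ p : ℕ × ℤ, (τ.den : ℤ) * p.2 = τ.num * p.1 → ∀ r ∈ 𝒜 p,
      r ∈ Algebra.adjoin ℂ (↑(G.image X) : Set R) := by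
    intro p hp r hr
    have hr' : r ∈ Submodule.span ℂ
        ((Submonoid.closure (Set.range x) : Submonoid R) : Set R) := by
      have h1 := Algebra.adjoin_eq_span ℂ (Set.range x)
      have h2 : r ∈ Subalgebra.toSubmodule (Algebra.adjoin ℂ (Set.range x)) := htop r
      rwa [h1] at h2
    have key : ∀ y ∈ Submodule.span ℂ
        ((Submonoid.closure (Set.range x) : Submonoid R) : Set R),
        (DirectSum.decompose 𝒜 y p : R) ∈ Algebra.adjoin ℂ (↑(G.image X) : Set R) := by
      intro y hy
      induction hy using Submodule.span_induction with
      | mem y hy =>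
        obtain ⟨α, rfl⟩ := hmono y hy
        by_cases hq : (∑ i, α i • d i) = p
        · rw [DirectSum.decompose_of_mem_same 𝒜 (hq ▸ hXmem α)]
          apply hXadj
          apply hG2
          rw [hdeg α, hq]
          omega
        · rw [DirectSum.decompose_of_mem_ne 𝒜 (hXmem α) hq]
          exact zero_mem _
      | zero =>
        simp only [DirectSum.decompose_zero, DirectSum.zero_apply,
          ZeroMemClass.coe_zero]
        exact zero_mem _
      | add u v _ _ hu hv =>
        rw [DirectSum.decompose_add, DirectSum.add_apply, Submodule.coe_add]
        exact add_mem hu hv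
      | smul c u _ hu =>
        rw [DirectSum.decompose_smul, DirectSum.smul_apply, Submodule.coe_smul]
        exact Subalgebra.smul_mem _ hu c
    have := key r hr'
    rwa [DirectSum.decompose_of_mem_same 𝒜 hr] at this
  -- conclude
  refine ⟨G.image X, le_antisymm ?_ ?_⟩
  · apply Algebra.adjoin_le
    intro r hr
    simp only [Finset.coe_image, Set.mem_image, Finset.mem_coe] at hr
    obtain ⟨α, hα, rfl⟩ := hr
    apply Algebra.subset_adjoin
    have hc : (τ.den : ℤ) * (∑ i, α i • d i).2 = τ.num * ((∑ i, α i • d i).1 : ℤ) := by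
      have := hG1 α hα
      rw [hdeg α] at this
      omega
    exact Set.mem_biUnion ((hSiff _).mpr hc) (hXmem α)
  · apply Algebra.adjoin_le
    intro r hr
    simp only [Set.mem_iUnion] at hr
    obtain ⟨p, hp, hrp⟩ := hr
    exact hK p ((hSiff p).mp hp) r hrp
end

section
/- Let P ⊂ ℝ^n be a lattice polytope and μ the projection to the first coordinate. The set of values μ(v) over vertices v of P is finite; ordering them a_0 < a_1 < … < a_r, for any two rationals τ, τ' lying in the same open interval (a_{i-1}, a_i), the slices P ∩ μ^{-1}(τ) and P ∩ μ^{-1}(τ') are normally equivalent polytopes (their normal fans coincide under the identification of the ambient hyperplanes). -/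
/-- The face of a compact convex set `K` selected by a linear functional `u`:
the set of maximizers of `u` on `K`. -/
def faceOf {n : ℕ} (K : Set (Fin n → ℝ)) (u : (Fin n → ℝ) →ₗ[ℝ] ℝ) :
    Set (Fin n → ℝ) :=
  {x ∈ K | ∀ y ∈ K, u y ≤ u x}

/-- Two (poly)topes are normally equivalent (have the same normal fan) iff two linear
functionals select the same face on one precisely when they do on the other. -/
def NormallyEquiv {n : ℕ} (K K' : Set (Fin n → ℝ)) : Prop :=
  ∀ u v : (Fin n → ℝ) →ₗ[ℝ] ℝ, (faceOf K u = faceOf K v ↔ faceOf K' u = faceOf K' v)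

section AuxSlice
variable {n : ℕ}


lemma faceOf_translate {N : ℕ} (K : Set (Fin N → ℝ)) (c : Fin N → ℝ) (u : (Fin N → ℝ) →ₗ[ℝ] ℝ) :
    faceOf ((fun y => y + c) '' K) u = (fun y => y + c) '' faceOf K u := by
  ext x
  simp only [faceOf, Set.mem_setOf_eq, Set.mem_image]
  constructor
  · rintro ⟨⟨y, hy, rfl⟩, hmax⟩
    exact ⟨y, ⟨hy, fun z hz => by
      have := hmax (z + c) ⟨z, hz, rfl⟩
      simpa [map_add] using this⟩, rfl⟩
  · rintro ⟨y, ⟨hy, hmax⟩, rfl⟩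
    refine ⟨⟨y, hy, rfl⟩, ?_⟩
    rintro z ⟨z', hz', rfl⟩
    simp only [map_add]
    linarith [hmax z' hz']

lemma hull_le {N : ℕ} (S : Set (Fin N → ℝ)) (u : (Fin N → ℝ) →ₗ[ℝ] ℝ) (a : ℝ)
    (h : ∀ s ∈ S, u s ≤ a) : ∀ x ∈ convexHull ℝ S, u x ≤ a :=
  fun _ hx => convexHull_min h (convex_halfSpace_le u.isLinear a) hx

lemma face_value {N : ℕ} (S : Finset (Fin N → ℝ)) (u v : (Fin N → ℝ) →ₗ[ℝ] ℝ) (a b : ℝ)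
    (x : Fin N → ℝ) (hx : x ∈ convexHull ℝ (S : Set (Fin N → ℝ)))
    (hua : ∀ s ∈ S, u s ≤ a) (hxa : u x = a)
    (hv : ∀ s ∈ S, u s = a → v s = b) : v x = b := by
  obtain ⟨w, hw0, hw1, hwx⟩ := Finset.mem_convexHull'.1 hx
  have hux : ∑ s ∈ S, w s * u s = a := by
    rw [← hxa, ← hwx, map_sum]; simp [map_smul]
  have hkey : ∀ s ∈ S, w s * (a - u s) = 0 := by
    have hsum : ∑ s ∈ S, w s * (a - u s) = 0 := by
      have : ∑ s ∈ S, w s * a = a := by rw [← Finset.sum_mul, hw1, one_mul]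
      simp only [mul_sub]
      rw [Finset.sum_sub_distrib, this, hux, sub_self]
    exact (Finset.sum_eq_zero_iff_of_nonneg (fun s hs =>
      mul_nonneg (hw0 s hs) (sub_nonneg.2 (hua s hs)))).1 hsum
  have hvx : ∑ s ∈ S, w s * v s = ∑ s ∈ S, w s * b := by
    refine Finset.sum_congr rfl (fun s hs => ?_)
    rcases mul_eq_zero.1 (hkey s hs) with h | h
    · rw [h, zero_mul, zero_mul]
    · rw [hv s hs (by linarith [sub_eq_zero.1 h])]
  calc v x = ∑ s ∈ S, w s * v s := by rw [← hwx, map_sum]; simp [map_smul]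
    _ = b := by rw [hvx, ← Finset.sum_mul, hw1, one_mul]


noncomputable def chord (t : ℝ) (p : (Fin (n+1) → ℝ) × (Fin (n+1) → ℝ)) : Fin (n+1) → ℝ :=
  ((p.2 0 - t) / (p.2 0 - p.1 0)) • p.1 + ((t - p.1 0) / (p.2 0 - p.1 0)) • p.2

lemma chord_mem_hull (t : ℝ) (V : Finset (Fin (n+1) → ℝ)) {p}
    (h1 : p.1 ∈ V) (h2 : p.2 ∈ V) (hlt : p.1 0 ≤ t) (hgt : t ≤ p.2 0) (hne : p.1 0 < p.2 0) :
    chord t p ∈ convexHull ℝ (V : Set (Fin (n+1) → ℝ)) := by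
  have hd : 0 < p.2 0 - p.1 0 := by linarith
  refine (convex_convexHull ℝ _) (subset_convexHull ℝ _ h1) (subset_convexHull ℝ _ h2)
    (div_nonneg (by linarith) hd.le) (div_nonneg (by linarith) hd.le) ?_
  field_simp
  ring

lemma chord_zero (t : ℝ) (p : (Fin (n+1) → ℝ) × (Fin (n+1) → ℝ)) (hne : p.1 0 ≠ p.2 0) :
    chord t p 0 = t := by
  have : p.2 0 - p.1 0 ≠ 0 := fun h => hne (by linarith [sub_eq_zero.1 h])
  simp only [chord, Pi.add_apply, Pi.smul_apply, smul_eq_mul]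
  field_simp
  ring

lemma slice_subset_hull (Vm Vp : Finset (Fin (n+1) → ℝ)) (t : ℝ)
    (hm : ∀ v ∈ Vm, v 0 < t) (hp : ∀ w ∈ Vp, t < w 0)
    (x : Fin (n+1) → ℝ) (hx : x ∈ convexHull ℝ ((↑(Vm ∪ Vp)) : Set (Fin (n+1) → ℝ)))
    (hx0 : x 0 = t) :
    x ∈ convexHull ℝ (chord t '' ↑(Vm ×ˢ Vp)) := by
  obtain ⟨l, hl0, hl1, hlx⟩ := Finset.mem_convexHull'.1 hx
  have hdisj : Disjoint Vm Vp := by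
    rw [Finset.disjoint_left]
    intro v hv hv'
    exact absurd (hp v hv') (not_lt.2 (le_of_lt (hm v hv)))
  have hl0m : ∀ v ∈ Vm, 0 ≤ l v := fun v hv => hl0 v (Finset.mem_union_left _ hv)
  have hl0p : ∀ w ∈ Vp, 0 ≤ l w := fun w hw => hl0 w (Finset.mem_union_right _ hw)
  set A := ∑ v ∈ Vm, l v with hA
  set B := ∑ w ∈ Vp, l w with hB
  set Sa := ∑ v ∈ Vm, l v * v 0 with hSa
  set Sb := ∑ w ∈ Vp, l w * w 0 with hSb
  have hAB : A + B = 1 := by rw [hA, hB, ← Finset.sum_union hdisj, hl1]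
  have hxj : ∀ j, ∑ y ∈ Vm ∪ Vp, l y * y j = x j := by
    intro j
    have := congrFun hlx j
    simpa [Finset.sum_apply] using this
  have hSab : Sa + Sb = t := by
    rw [hSa, hSb, ← Finset.sum_union hdisj, hxj 0, hx0]
  set s := ∑ v ∈ Vm, l v * (t - v 0) with hs_def
  set s' := ∑ w ∈ Vp, l w * (w 0 - t) with hs'_def
  have hsA : s = t * A - Sa := by
    rw [hs_def, hA, hSa, Finset.mul_sum, ← Finset.sum_sub_distrib]
    exact Finset.sum_congr rfl (fun v _ => by ring)
  have hs'B : s' = Sb - t * B := by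
    rw [hs'_def, hB, hSb, Finset.mul_sum, ← Finset.sum_sub_distrib]
    exact Finset.sum_congr rfl (fun w _ => by ring)
  have hss' : s = s' := by rw [hsA, hs'B]; linear_combination t * hAB - hSab
  have hs0 : 0 ≤ s := Finset.sum_nonneg (fun v hv =>
    mul_nonneg (hl0m v hv) (by linarith [hm v hv]))
  have hs'0 : 0 ≤ s' := Finset.sum_nonneg (fun w hw =>
    mul_nonneg (hl0p w hw) (by linarith [hp w hw]))
  have hspos : 0 < s := by
    rcases eq_or_lt_of_le hs0 with h | h
    · exfalso
      have hAz : A = 0 := by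
        rw [hA]
        refine Finset.sum_eq_zero (fun v hv => ?_)
        have := (Finset.sum_eq_zero_iff_of_nonneg (fun v hv =>
          mul_nonneg (hl0m v hv) (by linarith [hm v hv] : (0:ℝ) ≤ t - v 0))).1 h.symm v hv
        rcases mul_eq_zero.1 this with h' | h'
        · exact h'
        · exact absurd h' (by intro hc; have := hm v hv; linarith [sub_eq_zero.1 hc])
      have hBz : B = 0 := by
        rw [hB]
        refine Finset.sum_eq_zero (fun w hw => ?_)
        have h2 : s' = 0 := by rw [← hss', ← h]
        have := (Finset.sum_eq_zero_iff_of_nonneg (fun w hw =>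
          mul_nonneg (hl0p w hw) (by linarith [hp w hw] : (0:ℝ) ≤ w 0 - t))).1 h2 w hw
        rcases mul_eq_zero.1 this with h' | h'
        · exact h'
        · exact absurd h' (by intro hc; have := hp w hw; linarith [sub_eq_zero.1 hc])
      rw [hAz, hBz] at hAB; norm_num at hAB
    · exact h
  -- weights on pairs
  set c : (Fin (n+1) → ℝ) × (Fin (n+1) → ℝ) → ℝ :=
    fun p => l p.1 * l p.2 * (p.2 0 - p.1 0) with hc
  have hc0 : ∀ p ∈ Vm ×ˢ Vp, 0 ≤ c p := by
    intro p hpm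
    obtain ⟨h1, h2⟩ := Finset.mem_product.1 hpm
    have := hm p.1 h1; have := hp p.2 h2
    exact mul_nonneg (mul_nonneg (hl0m _ h1) (hl0p _ h2)) (by linarith)
  have hcsum : ∑ p ∈ Vm ×ˢ Vp, c p = s := by
    rw [Finset.sum_product]
    have inner : ∀ v ∈ Vm, ∑ w ∈ Vp, c (v, w) = l v * Sb - (l v * v 0) * B := by
      intro v _
      rw [hSb, hB, Finset.mul_sum, Finset.mul_sum, ← Finset.sum_sub_distrib]
      exact Finset.sum_congr rfl (fun w _ => by simp only [hc]; ring)
    rw [Finset.sum_congr rfl inner, Finset.sum_sub_distrib, ← Finset.sum_mul,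
      ← Finset.sum_mul]
    have e1 : ∑ v ∈ Vm, l v = A := rfl
    have e2 : ∑ v ∈ Vm, l v * v 0 = Sa := rfl
    rw [e1, e2]
    -- A * Sb - Sa * B = s
    have h1 : Sb = s + t * B := by rw [hss', hs'B]; ring
    have h2 : Sa = t * A - s := by rw [hsA]; ring
    rw [h1, h2]; nlinarith [hAB]
  have hvec : ∑ p ∈ Vm ×ˢ Vp, c p • chord t p = s • x := by
    funext j
    simp only [Finset.sum_apply, Pi.smul_apply, smul_eq_mul]
    have term : ∀ p ∈ Vm ×ˢ Vp,
        c p * chord t p j = l p.1 * l p.2 * ((p.2 0 - t) * p.1 j + (t - p.1 0) * p.2 j) := by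
      intro p hpm
      obtain ⟨h1, h2⟩ := Finset.mem_product.1 hpm
      have hd : p.2 0 - p.1 0 ≠ 0 := by
        have := hm p.1 h1; have := hp p.2 h2; intro hcon; linarith [sub_eq_zero.1 hcon]
      simp only [hc, chord, Pi.add_apply, Pi.smul_apply, smul_eq_mul]
      field_simp
    rw [Finset.sum_congr rfl term, Finset.sum_product]
    have inner : ∀ v ∈ Vm, ∑ w ∈ Vp,
        l v * l w * ((w 0 - t) * v j + (t - v 0) * w j)
        = (l v * v j) * s' + (l v * (t - v 0)) * (∑ w ∈ Vp, l w * w j) := by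
      intro v _
      rw [hs'_def, Finset.mul_sum, Finset.mul_sum, ← Finset.sum_add_distrib]
      exact Finset.sum_congr rfl (fun w _ => by ring)
    rw [Finset.sum_congr rfl inner, Finset.sum_add_distrib, ← Finset.sum_mul, ← Finset.sum_mul]
    have e3 : ∑ v ∈ Vm, l v * v j + ∑ w ∈ Vp, l w * w j = x j := by
      rw [← Finset.sum_union hdisj]; exact hxj j
    have e4 : ∑ v ∈ Vm, l v * (t - v 0) = s := rfl
    rw [e4, ← hss']
    nlinarith [e3]
  have hmem := Finset.centerMass_mem_convexHull (Vm ×ˢ Vp) hc0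
    (by rw [hcsum]; exact hspos)
    (fun p hpm => Set.mem_image_of_mem (chord t) (Finset.mem_coe.2 hpm))
  have : (Vm ×ˢ Vp).centerMass c (chord t) = x := by
    rw [Finset.centerMass, hcsum, hvec, inv_smul_smul₀ (ne_of_gt hspos)]
  rwa [this] at hmem

lemma coord_isLinear : IsLinearMap ℝ (fun y : Fin (n+1) → ℝ => y 0) :=
  ⟨fun _ _ => rfl, fun _ _ => rfl⟩


lemma chord_affine (t1 t2 a b : ℝ) (hab : a + b = 1)
    (p : (Fin (n+1) → ℝ) × (Fin (n+1) → ℝ)) (hne : p.1 0 < p.2 0) :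
    chord (a*t1 + b*t2) p = a • chord t1 p + b • chord t2 p := by
  have hd : p.2 0 - p.1 0 ≠ 0 := sub_ne_zero.2 (ne_of_gt hne)
  have hb : b = 1 - a := by linarith
  subst hb
  funext j
  simp only [chord, Pi.add_apply, Pi.smul_apply, smul_eq_mul]
  field_simp
  ring

section Face

variable (Vm Vp : Finset (Fin (n+1) → ℝ)) (t : ℝ)

lemma chord_mem_slice (hm : ∀ v ∈ Vm, v 0 < t) (hp : ∀ w ∈ Vp, t < w 0)
    {p} (hpI : p ∈ Vm ×ˢ Vp) :
    chord t p ∈ {y | y ∈ convexHull ℝ ((↑(Vm ∪ Vp)) : Set (Fin (n+1) → ℝ)) ∧ y 0 = t} := by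
  obtain ⟨h1, h2⟩ := Finset.mem_product.1 hpI
  have hv := hm p.1 h1
  have hw := hp p.2 h2
  exact ⟨chord_mem_hull t (Vm ∪ Vp) (Finset.mem_union_left _ h1) (Finset.mem_union_right _ h2)
    hv.le hw.le (lt_trans hv hw), chord_zero t p (ne_of_lt (lt_trans hv hw))⟩

lemma slice_eq_hull (hm : ∀ v ∈ Vm, v 0 < t) (hp : ∀ w ∈ Vp, t < w 0) :
    {y | y ∈ convexHull ℝ ((↑(Vm ∪ Vp)) : Set (Fin (n+1) → ℝ)) ∧ y 0 = t}
      = convexHull ℝ (chord t '' ↑(Vm ×ˢ Vp)) := by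
  apply Set.Subset.antisymm
  · intro x hx
    exact slice_subset_hull Vm Vp t hm hp x hx.1 hx.2
  · apply convexHull_min
    · rintro s ⟨q, hq, rfl⟩
      exact chord_mem_slice Vm Vp t hm hp (Finset.mem_coe.1 hq)
    · exact (convex_convexHull ℝ _).inter (convex_hyperplane coord_isLinear t)

lemma slice_bound (hm : ∀ v ∈ Vm, v 0 < t) (hp : ∀ w ∈ Vp, t < w 0)
    (w : (Fin (n+1) → ℝ) →ₗ[ℝ] ℝ) (a : ℝ)
    (h : ∀ q ∈ Vm ×ˢ Vp, w (chord t q) ≤ a) :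
    ∀ y ∈ {y | y ∈ convexHull ℝ ((↑(Vm ∪ Vp)) : Set (Fin (n+1) → ℝ)) ∧ y 0 = t}, w y ≤ a := by
  intro y hy
  rw [slice_eq_hull Vm Vp t hm hp] at hy
  exact hull_le _ w a (by rintro s ⟨q, hq, rfl⟩; exact h q (Finset.mem_coe.1 hq)) y hy

lemma mem_face_iff (hm : ∀ v ∈ Vm, v 0 < t) (hp : ∀ w ∈ Vp, t < w 0)
    (w : (Fin (n+1) → ℝ) →ₗ[ℝ] ℝ) {p} (hpI : p ∈ Vm ×ˢ Vp) :
    chord t p ∈ faceOf {y | y ∈ convexHull ℝ ((↑(Vm ∪ Vp)) : Set (Fin (n+1) → ℝ)) ∧ y 0 = t} w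
      ↔ ∀ q ∈ Vm ×ˢ Vp, w (chord t q) ≤ w (chord t p) := by
  constructor
  · intro hf q hq
    exact hf.2 (chord t q) (chord_mem_slice Vm Vp t hm hp hq)
  · intro hmax
    exact ⟨chord_mem_slice Vm Vp t hm hp hpI,
      slice_bound Vm Vp t hm hp w _ hmax⟩

lemma face_eq_iff (hVm : Vm.Nonempty) (hVp : Vp.Nonempty)
    (hm : ∀ v ∈ Vm, v 0 < t) (hp : ∀ w ∈ Vp, t < w 0)
    (u v : (Fin (n+1) → ℝ) →ₗ[ℝ] ℝ) :
    (faceOf {y | y ∈ convexHull ℝ ((↑(Vm ∪ Vp)) : Set (Fin (n+1) → ℝ)) ∧ y 0 = t} u =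
     faceOf {y | y ∈ convexHull ℝ ((↑(Vm ∪ Vp)) : Set (Fin (n+1) → ℝ)) ∧ y 0 = t} v) ↔
    (∀ p ∈ Vm ×ˢ Vp, (∀ q ∈ Vm ×ˢ Vp, u (chord t q) ≤ u (chord t p)) ↔
                     (∀ q ∈ Vm ×ˢ Vp, v (chord t q) ≤ v (chord t p))) := by
  constructor
  · intro hfe p hpI
    constructor
    · intro hu
      exact (mem_face_iff Vm Vp t hm hp v hpI).1
        (hfe ▸ (mem_face_iff Vm Vp t hm hp u hpI).2 hu)
    · intro hv
      exact (mem_face_iff Vm Vp t hm hp u hpI).1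
        (hfe ▸ (mem_face_iff Vm Vp t hm hp v hpI).2 hv)
  · intro hiff
    have key : ∀ u' v' : (Fin (n+1) → ℝ) →ₗ[ℝ] ℝ,
        (∀ p ∈ Vm ×ˢ Vp, (∀ q ∈ Vm ×ˢ Vp, u' (chord t q) ≤ u' (chord t p)) →
                         (∀ q ∈ Vm ×ˢ Vp, v' (chord t q) ≤ v' (chord t p))) →
        faceOf {y | y ∈ convexHull ℝ ((↑(Vm ∪ Vp)) : Set (Fin (n+1) → ℝ)) ∧ y 0 = t} u' ⊆
        faceOf {y | y ∈ convexHull ℝ ((↑(Vm ∪ Vp)) : Set (Fin (n+1) → ℝ)) ∧ y 0 = t} v' := by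
      intro u' v' himp x hx
      obtain ⟨pu, hpuI, hpu⟩ := Finset.exists_max_image (Vm ×ˢ Vp)
        (fun q => u' (chord t q)) (hVm.product hVp)
      obtain ⟨pv, hpvI, hpv⟩ := Finset.exists_max_image (Vm ×ˢ Vp)
        (fun q => v' (chord t q)) (hVm.product hVp)
      set a := u' (chord t pu) with ha
      set b := v' (chord t pv) with hb
      have hxa : u' x = a := le_antisymm
        (slice_bound Vm Vp t hm hp u' a (fun q hq => hpu q hq) x hx.1)
        (hx.2 (chord t pu) (chord_mem_slice Vm Vp t hm hp hpuI))
      have hSx : x ∈ convexHull ℝ (((Vm ×ˢ Vp).image (chord t) : Finset (Fin (n+1) → ℝ)) :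
          Set (Fin (n+1) → ℝ)) := by
        rw [Finset.coe_image, ← slice_eq_hull Vm Vp t hm hp]
        exact hx.1
      have hvx : v' x = b := by
        refine face_value ((Vm ×ˢ Vp).image (chord t)) u' v' a b x hSx ?_ hxa ?_
        · intro s hs
          obtain ⟨q, hq, rfl⟩ := Finset.mem_image.1 hs
          exact hpu q hq
        · intro s hs hsa
          obtain ⟨q, hq, rfl⟩ := Finset.mem_image.1 hs
          have hqmax : ∀ r ∈ Vm ×ˢ Vp, u' (chord t r) ≤ u' (chord t q) := by
            intro r hr; rw [hsa]; exact hpu r hr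
          have hqv := himp q hq hqmax
          exact le_antisymm (hpv q hq) (hqv pv hpvI)
      refine ⟨hx.1, fun y hy => ?_⟩
      rw [hvx]
      exact slice_bound Vm Vp t hm hp v' b (fun q hq => hpv q hq) y hy
    exact Set.Subset.antisymm (key u v (fun p hpI h => (hiff p hpI).1 h))
      (key v u (fun p hpI h => (hiff p hpI).2 h))

end Face


lemma slice_empty_lt {n : ℕ} (V : Finset (Fin (n+1) → ℝ)) (t : ℝ) (h : ∀ v ∈ V, v 0 < t) :
    {y | y ∈ convexHull ℝ (V : Set (Fin (n+1) → ℝ)) ∧ y 0 = t} = ∅ := by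
  ext x
  simp only [Set.mem_setOf_eq, Set.mem_empty_iff_false, iff_false, not_and]
  intro hx hx0
  have hmem : x ∈ {y : Fin (n+1) → ℝ | y 0 < t} :=
    convexHull_min (fun v hv => h v hv) (convex_halfSpace_lt coord_isLinear t) hx
  rw [Set.mem_setOf_eq, hx0] at hmem
  exact lt_irrefl t hmem

lemma slice_empty_gt {n : ℕ} (V : Finset (Fin (n+1) → ℝ)) (t : ℝ) (h : ∀ v ∈ V, t < v 0) :
    {y | y ∈ convexHull ℝ (V : Set (Fin (n+1) → ℝ)) ∧ y 0 = t} = ∅ := by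
  ext x
  simp only [Set.mem_setOf_eq, Set.mem_empty_iff_false, iff_false, not_and]
  intro hx hx0
  have hmem : x ∈ {y : Fin (n+1) → ℝ | t < y 0} :=
    convexHull_min (fun v hv => h v hv) (convex_halfSpace_gt coord_isLinear t) hx
  rw [Set.mem_setOf_eq, hx0] at hmem
  exact lt_irrefl t hmem

lemma faceOf_empty {N : ℕ} (u : (Fin N → ℝ) →ₗ[ℝ] ℝ) : faceOf (∅ : Set (Fin N → ℝ)) u = ∅ := by
  ext x; simp [faceOf]

lemma transfer_aux (Vm Vp : Finset (Fin (n+1) → ℝ)) (hVm : Vm.Nonempty) (hVp : Vp.Nonempty)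
    (ta tb ts lam : ℝ)
    (hma : ∀ v ∈ Vm, v 0 < ta) (hpa : ∀ w ∈ Vp, ta < w 0)
    (hmb : ∀ v ∈ Vm, v 0 < tb) (hpb : ∀ w ∈ Vp, tb < w 0)
    (hms : ∀ v ∈ Vm, v 0 < ts) (hps : ∀ w ∈ Vp, ts < w 0)
    (hl0 : 0 < lam) (hl1 : lam < 1) (hcomb : ta = lam * ts + (1 - lam) * tb)
    (u : (Fin (n+1) → ℝ) →ₗ[ℝ] ℝ) {p} (hpI : p ∈ Vm ×ˢ Vp)
    (hmax : ∀ q ∈ Vm ×ˢ Vp, u (chord ta q) ≤ u (chord ta p)) :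
    ∀ q ∈ Vm ×ˢ Vp, u (chord tb q) ≤ u (chord tb p) := by
  have hne : ∀ {q : (Fin (n+1) → ℝ) × (Fin (n+1) → ℝ)}, q ∈ Vm ×ˢ Vp → q.1 0 < q.2 0 := by
    intro q hq
    obtain ⟨h1, h2⟩ := Finset.mem_product.1 hq
    exact lt_trans (hma _ h1) (hpa _ h2)
  have hchordmem : ∀ (t : ℝ), (∀ v ∈ Vm, v 0 < t) → (∀ w ∈ Vp, t < w 0) →
      ∀ {q : (Fin (n+1) → ℝ) × (Fin (n+1) → ℝ)}, q ∈ Vm ×ˢ Vp →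
      chord t q ∈ convexHull ℝ ((↑(Vm ∪ Vp)) : Set (Fin (n+1) → ℝ)) := by
    intro t h1 h2 q hq
    obtain ⟨hq1, hq2⟩ := Finset.mem_product.1 hq
    exact chord_mem_hull t (Vm ∪ Vp) (Finset.mem_union_left _ hq1)
      (Finset.mem_union_right _ hq2) (h1 _ hq1).le (h2 _ hq2).le (hne hq)
  intro j hjI
  by_contra hlt
  push_neg at hlt
  obtain ⟨k, hkI, hk⟩ := Finset.exists_max_image (Vm ×ˢ Vp)
    (fun q => u (chord ts q)) (hVm.product hVp)
  set y := lam • chord ts k + (1 - lam) • chord tb j with hy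
  have hymem : y ∈ convexHull ℝ ((↑(Vm ∪ Vp)) : Set (Fin (n+1) → ℝ)) :=
    (convex_convexHull ℝ _) (hchordmem ts hms hps hkI) (hchordmem tb hmb hpb hjI)
      hl0.le (by linarith) (by ring)
  have hy0 : y 0 = ta := by
    have h1 : chord ts k 0 = ts := chord_zero ts k (ne_of_lt (hne hkI))
    have h2 : chord tb j 0 = tb := chord_zero tb j (ne_of_lt (hne hjI))
    simp only [hy, Pi.add_apply, Pi.smul_apply, smul_eq_mul, h1, h2]
    linarith [hcomb]
  have hyK : y ∈ convexHull ℝ (chord ta '' ↑(Vm ×ˢ Vp)) :=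
    slice_subset_hull Vm Vp ta hma hpa y hymem hy0
  have hub : u y ≤ u (chord ta p) := by
    refine hull_le _ u _ ?_ y hyK
    rintro s ⟨q, hq, rfl⟩
    exact hmax q (Finset.mem_coe.1 hq)
  have huy : u y = lam * u (chord ts k) + (1 - lam) * u (chord tb j) := by
    simp only [hy, map_add, map_smul, smul_eq_mul]
  have haff : u (chord ta p) = lam * u (chord ts p) + (1 - lam) * u (chord tb p) := by
    rw [hcomb, chord_affine ts tb lam (1-lam) (by ring) p (hne hpI), map_add, map_smul,
      map_smul, smul_eq_mul, smul_eq_mul]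
  have h1 : u (chord ts p) ≤ u (chord ts k) := hk p hpI
  have hlam1 : (0:ℝ) < 1 - lam := by linarith
  nlinarith [mul_le_mul_of_nonneg_left h1 hl0.le,
    mul_lt_mul_of_pos_left hlt hlam1]

lemma transfer (Vm Vp : Finset (Fin (n+1) → ℝ)) (hVm : Vm.Nonempty) (hVp : Vp.Nonempty)
    (ta tb : ℝ)
    (hma : ∀ v ∈ Vm, v 0 < ta) (hpa : ∀ w ∈ Vp, ta < w 0)
    (hmb : ∀ v ∈ Vm, v 0 < tb) (hpb : ∀ w ∈ Vp, tb < w 0)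
    (u : (Fin (n+1) → ℝ) →ₗ[ℝ] ℝ) {p} (hpI : p ∈ Vm ×ˢ Vp)
    (hmax : ∀ q ∈ Vm ×ˢ Vp, u (chord ta q) ≤ u (chord ta p)) :
    ∀ q ∈ Vm ×ˢ Vp, u (chord tb q) ≤ u (chord tb p) := by
  rcases lt_trichotomy ta tb with h | h | h
  · -- ts below ta
    set mm := Vm.sup' hVm (fun v => v 0) with hmm
    have hmmlt : mm < ta := (Finset.sup'_lt_iff hVm).2 hma
    set ts := (mm + ta)/2 with hts
    have hts1 : ∀ v ∈ Vm, v 0 < ts := fun v hv =>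
      lt_of_le_of_lt (Finset.le_sup' (fun v => v 0) hv) (by rw [hts]; linarith)
    have htsa : ts < ta := by rw [hts]; linarith
    have hts2 : ∀ w ∈ Vp, ts < w 0 := fun w hw => lt_trans htsa (hpa w hw)
    set lam := (tb - ta)/(tb - ts) with hlam
    clear_value mm ts lam
    have hden : 0 < tb - ts := by linarith
    have hnum : 0 < tb - ta := by linarith
    have hl0 : 0 < lam := by rw [hlam]; exact div_pos hnum hden
    have hprod : lam * (tb - ts) = tb - ta := by
      rw [hlam]; exact div_mul_cancel₀ _ (ne_of_gt hden)
    have hl1 : lam < 1 := by rw [hlam]; exact (div_lt_one hden).2 (by linarith)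
    have hcomb : ta = lam * ts + (1 - lam) * tb := by linear_combination hprod
    exact transfer_aux Vm Vp hVm hVp ta tb ts lam hma hpa hmb hpb hts1 hts2
      hl0 hl1 hcomb u hpI hmax
  · subst h; exact hmax
  · -- ts above ta
    set mp := Vp.inf' hVp (fun w => w 0) with hmp
    have hmplt : ta < mp := (Finset.lt_inf'_iff hVp).2 hpa
    set ts := (ta + mp)/2 with hts
    have hts2 : ∀ w ∈ Vp, ts < w 0 := fun w hw =>
      lt_of_lt_of_le (by rw [hts]; linarith [Finset.inf'_le (fun w => w 0) hw])
        (le_refl _)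
    have htsa : ta < ts := by rw [hts]; linarith
    have hts1 : ∀ v ∈ Vm, v 0 < ts := fun v hv => lt_trans (hma v hv) htsa
    set lam := (tb - ta)/(tb - ts) with hlam
    clear_value mp ts lam
    have hden : tb - ts < 0 := by linarith
    have hnum : tb - ta < 0 := by linarith
    have hl0 : 0 < lam := by rw [hlam]; exact div_pos_of_neg_of_neg hnum hden
    have hprod : lam * (tb - ts) = tb - ta := by
      rw [hlam]; exact div_mul_cancel₀ _ (ne_of_lt hden)
    have hl1 : lam < 1 := by nlinarith
    have hcomb : ta = lam * ts + (1 - lam) * tb := by linear_combination hprod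
    exact transfer_aux Vm Vp hVm hVp ta tb ts lam hma hpa hmb hpb hts1 hts2
      hl0 hl1 hcomb u hpI hmax

end AuxSlice


/-- Let `P ⊂ ℝ^{n+1}` be a lattice polytope (convex hull of a finite set of
integral points) and `μ` the projection to the `0`-th coordinate. The set of values of `μ`
on the vertices is finite; and if two rationals `τ, τ'` lie in the same open interval
between consecutive such critical values (no vertex value lies in `[min τ τ', max τ τ']`),
then the slices `P ∩ μ⁻¹(τ)` and `P ∩ μ⁻¹(τ')` are normally equivalent, after identifying
the ambient hyperplanes by the translation along the `0`-th axis. -/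
theorem stmt_6 (n : ℕ) (V : Finset (Fin (n + 1) → ℝ)) (hV : V.Nonempty)
    (hlat : ∀ v ∈ V, ∀ i, ∃ z : ℤ, v i = (z : ℝ))
    (P : Set (Fin (n + 1) → ℝ)) (hP : P = convexHull ℝ (V : Set (Fin (n + 1) → ℝ)))
    (τ τ' : ℚ)
    (hsep : ∀ v ∈ V, v 0 < min (τ : ℝ) (τ' : ℝ) ∨ max (τ : ℝ) (τ' : ℝ) < v 0) :
    {a : ℝ | ∃ v ∈ V, v 0 = a}.Finite ∧
    NormallyEquiv {y | y ∈ P ∧ y 0 = (τ : ℝ)}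
      ((fun y => y + fun i => if i = 0 then (τ : ℝ) - (τ' : ℝ) else 0) ''
        {y | y ∈ P ∧ y 0 = (τ' : ℝ)}) := by
  classical
  constructor
  · have he : {a : ℝ | ∃ v ∈ V, v 0 = a} = (fun v => v 0) '' (V : Set (Fin (n+1) → ℝ)) := by
      ext a; simp [Set.mem_image]
    rw [he]
    exact V.finite_toSet.image _
  · intro u v
    have htr : ∀ w : (Fin (n+1) → ℝ) →ₗ[ℝ] ℝ,
        faceOf ((fun y => y + fun i => if i = 0 then (τ : ℝ) - (τ' : ℝ) else 0) ''
          {y | y ∈ P ∧ y 0 = (τ' : ℝ)}) w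
        = (fun y => y + fun i => if i = 0 then (τ : ℝ) - (τ' : ℝ) else 0) ''
          faceOf {y | y ∈ P ∧ y 0 = (τ' : ℝ)} w :=
      fun w => faceOf_translate _ _ w
    rw [htr u, htr v, Set.image_eq_image (add_left_injective _)]
    -- split vertices
    set Vm := V.filter (fun v => v 0 < min (τ : ℝ) (τ' : ℝ)) with hVmdef
    set Vp := V.filter (fun v => max (τ : ℝ) (τ' : ℝ) < v 0) with hVpdef
    have hunion : V = Vm ∪ Vp := by
      ext w
      simp only [hVmdef, hVpdef, Finset.mem_union, Finset.mem_filter]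
      constructor
      · intro hw
        rcases hsep w hw with h | h
        · exact Or.inl ⟨hw, h⟩
        · exact Or.inr ⟨hw, h⟩
      · rintro (⟨hw, -⟩ | ⟨hw, -⟩) <;> exact hw
    have hmτ : ∀ w ∈ Vm, w 0 < (τ : ℝ) := fun w hw =>
      lt_of_lt_of_le (Finset.mem_filter.1 hw).2 (min_le_left _ _)
    have hmτ' : ∀ w ∈ Vm, w 0 < (τ' : ℝ) := fun w hw =>
      lt_of_lt_of_le (Finset.mem_filter.1 hw).2 (min_le_right _ _)
    have hpτ : ∀ w ∈ Vp, (τ : ℝ) < w 0 := fun w hw =>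
      lt_of_le_of_lt (le_max_left _ _) (Finset.mem_filter.1 hw).2
    have hpτ' : ∀ w ∈ Vp, (τ' : ℝ) < w 0 := fun w hw =>
      lt_of_le_of_lt (le_max_right _ _) (Finset.mem_filter.1 hw).2
    by_cases hVmne : Vm.Nonempty
    · by_cases hVpne : Vp.Nonempty
      · rw [hP, hunion]
        rw [face_eq_iff Vm Vp (τ : ℝ) hVmne hVpne hmτ hpτ u v,
            face_eq_iff Vm Vp (τ' : ℝ) hVmne hVpne hmτ' hpτ' u v]
        have hxfer : ∀ (w : (Fin (n+1) → ℝ) →ₗ[ℝ] ℝ) (p : _ × _), p ∈ Vm ×ˢ Vp →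
            ((∀ q ∈ Vm ×ˢ Vp, w (chord (τ : ℝ) q) ≤ w (chord (τ : ℝ) p)) ↔
             (∀ q ∈ Vm ×ˢ Vp, w (chord (τ' : ℝ) q) ≤ w (chord (τ' : ℝ) p))) :=
          fun w p hpI =>
            ⟨transfer Vm Vp hVmne hVpne (τ : ℝ) (τ' : ℝ) hmτ hpτ hmτ' hpτ' w hpI,
             transfer Vm Vp hVmne hVpne (τ' : ℝ) (τ : ℝ) hmτ' hpτ' hmτ hpτ w hpI⟩
        constructor
        · intro h p hpI
          rw [← hxfer u p hpI, ← hxfer v p hpI]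
          exact h p hpI
        · intro h p hpI
          rw [hxfer u p hpI, hxfer v p hpI]
          exact h p hpI
      · -- Vp empty : every vertex below both levels
        have hall : ∀ w ∈ V, w 0 < min (τ : ℝ) (τ' : ℝ) := by
          intro w hw
          rcases hsep w hw with h | h
          · exact h
          · exact absurd (Finset.mem_filter.2 ⟨hw, h⟩) (fun hc => hVpne ⟨w, hc⟩)
        have e1 : {y | y ∈ P ∧ y 0 = (τ : ℝ)} = ∅ := by
          rw [hP]
          exact slice_empty_lt V _ (fun w hw =>
            lt_of_lt_of_le (hall w hw) (min_le_left _ _))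
        have e2 : {y | y ∈ P ∧ y 0 = (τ' : ℝ)} = ∅ := by
          rw [hP]
          exact slice_empty_lt V _ (fun w hw =>
            lt_of_lt_of_le (hall w hw) (min_le_right _ _))
        rw [e1, e2, faceOf_empty, faceOf_empty]
    · -- Vm empty : every vertex above both levels
      have hall : ∀ w ∈ V, max (τ : ℝ) (τ' : ℝ) < w 0 := by
        intro w hw
        rcases hsep w hw with h | h
        · exact absurd (Finset.mem_filter.2 ⟨hw, h⟩) (fun hc => hVmne ⟨w, hc⟩)
        · exact h
      have e1 : {y | y ∈ P ∧ y 0 = (τ : ℝ)} = ∅ := by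
        rw [hP]
        exact slice_empty_gt V _ (fun w hw =>
          lt_of_le_of_lt (le_max_left _ _) (hall w hw))
      have e2 : {y | y ∈ P ∧ y 0 = (τ' : ℝ)} = ∅ := by
        rw [hP]
        exact slice_empty_gt V _ (fun w hw =>
          lt_of_le_of_lt (le_max_right _ _) (hall w hw))
      rw [e1, e2, faceOf_empty, faceOf_empty]
end
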